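/- Let F be a CNF formula containing the grid product L ⋈ Γ := {γ ∪ {ℓ} : ℓ ∈ L, γ ∈ Γ} for a clause L and a set of clauses Γ, where no clause of Γ or unit of L contains the fresh variable y. Let F' := (F \ (L ⋈ Γ)) ∪ {¬y ∨ ℓ : ℓ ∈ L} ∪ {y ∨ γ : γ ∈ Γ}. Then F is satisfiable if and only if F' is satisfiable. -/
import Mathlib


/-- Soundness of one BVA step: replacing a grid product `L ⋈ Γ` inside `F` by the
clauses `¬y ∨ ℓ` (`ℓ ∈ L`) and `y ∨ γ` (`γ ∈ Γ`), where `y` is a fresh variable,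
preserves satisfiability. A literal is a pair `(v, polarity)`; an assignment `τ`
satisfies a clause if it satisfies some literal of it. -/
theorem stmt_13 {V : Type*} (F : Set (Set (V × Bool))) (L : Set (V × Bool))
    (Γ : Set (Set (V × Bool))) (y : V)
    (hsub : {D | ∃ ℓ ∈ L, ∃ γ ∈ Γ, D = insert ℓ γ} ⊆ F)
    (hyF : ∀ C ∈ F, ∀ b : Bool, (y, b) ∉ C)
    (hyL : ∀ b : Bool, (y, b) ∉ L)
    (hyΓ : ∀ γ ∈ Γ, ∀ b : Bool, (y, b) ∉ γ) :
    (∃ τ : V → Bool, ∀ C ∈ F, ∃ l ∈ C, τ l.1 = l.2) ↔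
      (∃ τ : V → Bool, ∀ C ∈
          (F \ {D | ∃ ℓ ∈ L, ∃ γ ∈ Γ, D = insert ℓ γ}) ∪
            {C | ∃ ℓ ∈ L, C = {(y, false), ℓ}} ∪
            {C | ∃ γ ∈ Γ, C = insert (y, true) γ},
        ∃ l ∈ C, τ l.1 = l.2) := by
  classical
  constructor
  · rintro ⟨τ, hτ⟩
    by_cases h : ∀ ℓ ∈ L, τ ℓ.1 = ℓ.2
    · refine ⟨fun v => if v = y then true else τ v, ?_⟩
      intro C hC
      rcases hC with (⟨hF, -⟩ | ⟨ℓ, hℓ, rfl⟩) | ⟨γ, hγ, rfl⟩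
      · obtain ⟨l, hl, hτl⟩ := hτ C hF
        have hne : l.1 ≠ y := fun e => hyF C hF l.2 (by rw [← e]; simpa using hl)
        exact ⟨l, hl, by simp [hne, hτl]⟩
      · have hne : ℓ.1 ≠ y := fun e => hyL ℓ.2 (by rw [← e]; simpa using hℓ)
        exact ⟨ℓ, by simp, by simp [hne, h ℓ hℓ]⟩
      · exact ⟨(y, true), by simp, by simp⟩
    · push_neg at h
      obtain ⟨ℓ₀, hℓ₀, hℓ₀f⟩ := h
      refine ⟨fun v => if v = y then false else τ v, ?_⟩
      intro C hC
      rcases hC with (⟨hF, -⟩ | ⟨ℓ, hℓ, rfl⟩) | ⟨γ, hγ, rfl⟩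
      · obtain ⟨l, hl, hτl⟩ := hτ C hF
        have hne : l.1 ≠ y := fun e => hyF C hF l.2 (by rw [← e]; simpa using hl)
        exact ⟨l, hl, by simp [hne, hτl]⟩
      · exact ⟨(y, false), by simp, by simp⟩
      · have hCF : insert ℓ₀ γ ∈ F := hsub ⟨ℓ₀, hℓ₀, γ, hγ, rfl⟩
        obtain ⟨l, hl, hτl⟩ := hτ _ hCF
        have hlγ : l ∈ γ := by
          rcases hl with rfl | hl
          · exact absurd hτl hℓ₀f
          · exact hl
        have hne : l.1 ≠ y := fun e => hyΓ γ hγ l.2 (by rw [← e]; simpa using hlγ)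
        exact ⟨l, Set.mem_insert_of_mem _ hlγ, by simp [hne, hτl]⟩
  · rintro ⟨τ, hτ⟩
    refine ⟨τ, ?_⟩
    intro C hC
    by_cases hg : C ∈ {D | ∃ ℓ ∈ L, ∃ γ ∈ Γ, D = insert ℓ γ}
    · obtain ⟨ℓ, hℓ, γ, hγ, rfl⟩ := hg
      by_cases hy : τ y = true
      · obtain ⟨l, hl, hτl⟩ := hτ {(y, false), ℓ} (Or.inl (Or.inr ⟨ℓ, hℓ, rfl⟩))
        rcases hl with rfl | rfl
        · simp [hy] at hτl
        · exact ⟨l, Set.mem_insert _ _, hτl⟩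
      · obtain ⟨l, hl, hτl⟩ := hτ (insert (y, true) γ) (Or.inr ⟨γ, hγ, rfl⟩)
        rcases hl with rfl | hl
        · exact absurd hτl hy
        · exact ⟨l, Set.mem_insert_of_mem _ hl, hτl⟩
    · obtain ⟨l, hl, hτl⟩ := hτ C (Or.inl (Or.inl ⟨hC, hg⟩))
      exact ⟨l, hl, hτl⟩
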